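/- For every integer n ≥ 1, the n-th Pell number satisfies P(n) = (3^(n²+n) mod (3^(2n) − 2·3^n − 1)) mod 3^n. -/
import Mathlib


/-- The Pell numbers: `P(0) = 0`, `P(1) = 1`, `P(n+2) = 2·P(n+1) + P(n)`. -/
def pell : ℕ → ℤ
  | 0 => 0
  | 1 => 1
  | n + 2 => 2 * pell (n + 1) + pell n

lemma pell_nonneg : ∀ n, 0 ≤ pell n
  | 0 => le_refl 0
  | 1 => by norm_num [pell]
  | n + 2 => by
    have h1 := pell_nonneg n
    have h2 := pell_nonneg (n + 1)
    rw [pell]; linarith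

lemma pell_mono : ∀ n, pell n ≤ pell (n + 1)
  | 0 => by norm_num [pell]
  | n + 1 => by
    have h1 := pell_nonneg n
    have h2 := pell_nonneg (n + 1)
    show pell (n + 1) ≤ pell (n + 2)
    rw [pell]; linarith

lemma pell_bound : ∀ n, 2 ≤ n → pell (n + 1) ≤ 3 ^ n - 3 := by
  intro n
  induction n with
  | zero => omega
  | succ m ih =>
    intro hm
    rcases Nat.lt_or_ge m 2 with h | h
    · interval_cases m
      · omega
      · norm_num [pell]
    · have h1 := ih h
      have h2 := pell_mono m
      have h3 := pell_nonneg m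
      show pell (m + 2) ≤ 3 ^ (m + 1) - 3
      rw [pell, pow_succ]
      linarith

lemma pell_key (b : ℤ) : ∀ k, (b ^ 2 - 2 * b - 1) ∣ (b ^ (k + 1) - (pell (k + 1) * b + pell k))
  | 0 => by norm_num [pell]
  | k + 1 => by
    obtain ⟨c, hc⟩ := pell_key b k
    exact ⟨b * c + pell (k + 1), by
      show b ^ (k + 2) - (pell (k + 2) * b + pell (k + 1)) = _
      rw [pell]; linear_combination b * hc⟩

theorem stmt_15 (n : ℕ) (hn : 1 ≤ n) :
    pell n =
      ((3 : ℤ) ^ (n ^ 2 + n) % ((3 : ℤ) ^ (2 * n) - 2 * 3 ^ n - 1)) % (3 : ℤ) ^ n := by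
  rcases Nat.lt_or_ge n 2 with h | h
  · interval_cases n
    norm_num [pell]
  · set b : ℤ := 3 ^ n with hb
    have hbig : (3 : ℤ) ^ (2 * n) = b ^ 2 := by rw [hb, ← pow_mul, mul_comm]
    have hexp : (3 : ℤ) ^ (n ^ 2 + n) = b ^ (n + 1) := by
      rw [hb, ← pow_mul]
      congr 1
      ring
    have hkey := pell_key b n
    have hbd : pell (n + 1) ≤ b - 3 := by
      have := pell_bound n h
      simpa [hb] using this
    have hpn : pell n ≤ b - 3 := le_trans (pell_mono n) hbd
    have hnn := pell_nonneg n
    have hnn1 := pell_nonneg (n + 1)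
    have hb3 : (3 : ℤ) ≤ b := by
      calc (3 : ℤ) = 3 ^ 1 := by norm_num
      _ ≤ 3 ^ n := by exact pow_le_pow_right₀ (by norm_num) hn
    have hX0 : 0 ≤ pell (n + 1) * b + pell n := by positivity
    have hXlt : pell (n + 1) * b + pell n < b ^ 2 - 2 * b - 1 := by nlinarith
    have hmod : b ^ (n + 1) % (b ^ 2 - 2 * b - 1)
        = (pell (n + 1) * b + pell n) % (b ^ 2 - 2 * b - 1) :=
      Int.ModEq.symm (Int.modEq_iff_dvd.mpr hkey)
    rw [hbig, hexp, hmod, Int.emod_eq_of_lt hX0 hXlt]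
    have : (pell (n + 1) * b + pell n) % b = pell n % b := by
      rw [add_comm]
      simpa using Int.add_mul_emod_self_right (a := pell n) (b := pell (n + 1)) (c := b)
    rw [this, Int.emod_eq_of_lt hnn (by linarith)]
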